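/- Let G be a finite simple bipartite graph on n vertices that is C_{4k}-free (contains no cycle whose length is divisible by 4). Then for every nonnegative even integer i, the coefficients of x^{n−i} in the characteristic polynomial φ(G,x) = det(xI − A(G)) and in the permanental polynomial π(G,x) = per(xI − A(G)) satisfy b_i = (−1)^{i/2} a_i. -/

import Mathlib

open Polynomial SimpleGraph
open scoped Classical

noncomputable section

/-- The adjacency matrix of a simple graph `G`, with entries in `R`. -/
def adjMat (R : Type*) [Zero R] [One R] {V : Type*} [Fintype V] (G : SimpleGraph V) :
    Matrix V V R := fun u v => if G.Adj u v then 1 else 0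

/-- The characteristic polynomial `det (xI - A(G))` of a simple graph `G`. -/
def charPolyG (R : Type*) [CommRing R] {V : Type*} [Fintype V] (G : SimpleGraph V) : R[X] :=
  (adjMat R G).charpoly

/-- The permanental polynomial `per (xI - A(G))` of a simple graph `G`. -/
def permPolyG (R : Type*) [CommRing R] {V : Type*} [Fintype V] (G : SimpleGraph V) : R[X] :=
  (Matrix.charmatrix (adjMat R G)).permanent

/-- The modified characteristic polynomial `φ_p(G,x) = ∑_{i even} (-1)^{i/2} a_i x^{n-i}`
of a (bipartite) graph `G` on `n` vertices, where `a_i` is the coefficient of `x^{n-i}`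
in the characteristic polynomial. -/
def phiP {V : Type*} [Fintype V] (G : SimpleGraph V) : ℝ[X] :=
  ∑ i ∈ Finset.range (Fintype.card V + 1),
    if Even i then
      C ((-1 : ℝ) ^ (i / 2) * (charPolyG ℝ G).coeff (Fintype.card V - i)) *
        X ^ (Fintype.card V - i)
    else 0

/-- `G` contains no cycle whose length is divisible by 4. -/
def C4kFree {V : Type*} (G : SimpleGraph V) : Prop :=
  ¬ ∃ (v : V) (c : G.Walk v v), c.IsCycle ∧ 4 ∣ c.length

/-- `G` is `4k`-intercyclic: it contains no two vertex-disjoint cycles,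
each of length divisible by 4. -/
def Intercyclic4k {V : Type*} (G : SimpleGraph V) : Prop :=
  ¬ ∃ (u v : V) (c : G.Walk u u) (d : G.Walk v v),
      c.IsCycle ∧ d.IsCycle ∧ 4 ∣ c.length ∧ 4 ∣ d.length ∧
      ∀ x, x ∈ c.support → x ∉ d.support

/-- A subgraph `R` of `G` is a cycle of `G` if it is the subgraph traced by some cycle walk. -/
def IsCycleSubgraph {V : Type*} (G : SimpleGraph V) (R : G.Subgraph) : Prop :=
  ∃ (v : V) (c : G.Walk v v), c.IsCycle ∧ R = c.toSubgraph

/-- The set of all `4k`-cycles (cycles of length divisible by 4) of `G`,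
viewed as subgraphs. -/
def cycles4k {V : Type*} (G : SimpleGraph V) : Set G.Subgraph :=
  {R | ∃ (v : V) (c : G.Walk v v), c.IsCycle ∧ 4 ∣ c.length ∧ R = c.toSubgraph}

/-- The connected component `c` of the subgraph `H` is a single edge (a `K₂`). -/
def IsEdgeComp {V : Type*} {G : SimpleGraph V} (H : G.Subgraph)
    (c : H.coe.ConnectedComponent) : Prop :=
  ∃ x y : H.verts, H.coe.Adj x y ∧ c.supp = {x, y}

/-- The connected component `c` of the subgraph `H` is a cycle: there is a cycle walk whose
support is exactly `c` and which uses every edge of `H` inside `c`. -/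
def IsCycleComp {V : Type*} {G : SimpleGraph V} (H : G.Subgraph)
    (c : H.coe.ConnectedComponent) : Prop :=
  ∃ (v : H.verts) (w : H.coe.Walk v v), w.IsCycle ∧
    {x | x ∈ w.support} = c.supp ∧
    ∀ x y : H.verts, H.coe.Adj x y → x ∈ c.supp → w.toSubgraph.Adj x y

/-- A Sachs subgraph of `G`: a subgraph each of whose connected components is either
a single edge or a cycle. -/
def IsSachs {V : Type*} {G : SimpleGraph V} (H : G.Subgraph) : Prop :=
  ∀ c : H.coe.ConnectedComponent, IsEdgeComp H c ∨ IsCycleComp H c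

/-- The number of connected components of the subgraph `H`. -/
def pCount {V : Type*} {G : SimpleGraph V} (H : G.Subgraph) : ℕ :=
  Nat.card H.coe.ConnectedComponent

/-- The number of components of `H` that are cycles of length divisible by 4. -/
def sCount {V : Type*} {G : SimpleGraph V} (H : G.Subgraph) : ℕ :=
  Set.ncard {c : H.coe.ConnectedComponent | IsCycleComp H c ∧ c.supp.ncard % 4 = 0}

/-- The number of components of `H` that are cycles of length congruent to 2 mod 4. -/
def tCount {V : Type*} {G : SimpleGraph V} (H : G.Subgraph) : ℕ :=
  Set.ncard {c : H.coe.ConnectedComponent | IsCycleComp H c ∧ c.supp.ncard % 4 = 2}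

/-- The number of components of `H` that are cycles. -/
def cycCount {V : Type*} {G : SimpleGraph V} (H : G.Subgraph) : ℕ :=
  Set.ncard {c : H.coe.ConnectedComponent | IsCycleComp H c}

/-- `R` is a union of connected components of `H`. -/
def IsComponentUnion {V : Type*} {G : SimpleGraph V} (R H : G.Subgraph) : Prop :=
  R ≤ H ∧ ∀ x y, H.Adj x y → x ∈ R.verts → R.Adj x y



/-! ### Auxiliary lemmas -/

lemma modeq_eq_aux {l a b : ℕ} (h : a ≡ b [MOD l]) (ha : a < l) (hb : b < l) : a = b := by
  rwa [Nat.ModEq, Nat.mod_eq_of_lt ha, Nat.mod_eq_of_lt hb] at h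

lemma orbitWalk {V : Type*} [Fintype V] (G : SimpleGraph V) (σ : Equiv.Perm V) (v : V)
    (m : ℕ) (hadj : ∀ k < m, G.Adj ((σ ^ k) v) ((σ ^ (k+1)) v)) :
    ∃ w : G.Walk v ((σ ^ m) v), w.length = m ∧
      w.support = (List.range (m+1)).map (fun k => (σ ^ k) v) ∧
      w.edges = (List.range m).map (fun k => s((σ ^ k) v, (σ ^ (k+1)) v)) := by
  induction m with
  | zero =>
    exact ⟨(SimpleGraph.Walk.nil' v).copy rfl (by simp), by simp,
      by simp [List.range_succ], by simp⟩
  | succ m ih =>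
    obtain ⟨w, hl, hs, he⟩ := ih (fun k hk => hadj k (by omega))
    refine ⟨w.concat (hadj m (by omega)), ?_, ?_, ?_⟩
    · simp [SimpleGraph.Walk.length_concat, hl]
    · rw [SimpleGraph.Walk.support_concat, hs, List.range_succ (n := m + 1)]
      simp [List.concat_eq_append]
    · rw [SimpleGraph.Walk.edges_concat, he, List.range_succ (n := m)]
      simp [List.concat_eq_append]

/-- Key lemma: the support of a permutation-cycle whose moved points are matched to
adjacent vertices has cardinality ≡ 2 mod 4, in a bipartite `C_{4k}`-free graph. -/
lemma keyCard {V : Type*} [Fintype V] (G : SimpleGraph V) (hbip : G.Colorable 2)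
    (hfree : C4kFree G) (σ : Equiv.Perm V) (hadj : ∀ v, σ v ≠ v → G.Adj (σ v) v)
    (S : Finset V) (hS : σ.IsCycleOn S) (hmoved : ∀ v ∈ S, σ v ≠ v)
    (h2 : 2 ≤ S.card) : S.card % 4 = 2 := by
  set l := S.card with hl
  obtain ⟨v, hv⟩ := Finset.card_pos.mp (hl ▸ (by omega : 0 < l))
  have horb : ∀ k : ℕ, (σ ^ k) v ∈ S := by
    intro k
    induction k with
    | zero => simpa using hv
    | succ k ih =>
      have : (σ ^ (k+1)) v = σ ((σ ^ k) v) := by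
        rw [pow_succ', Equiv.Perm.mul_apply]
      rw [this]
      exact hS.apply_mem_iff.mpr ih
  have hadj' : ∀ k : ℕ, G.Adj ((σ ^ k) v) ((σ ^ (k+1)) v) := by
    intro k
    have hstep : (σ ^ (k+1)) v = σ ((σ ^ k) v) := by
      rw [pow_succ', Equiv.Perm.mul_apply]
    rw [hstep]
    exact (hadj _ (hmoved _ (horb k))).symm
  have hret : (σ ^ l) v = v := (hS.pow_apply_eq hv).mpr dvd_rfl
  have heven : 2 ∣ l := by
    obtain ⟨C⟩ := hbip
    set f : V → ZMod 2 := fun x => if C x = 0 then 0 else 1 with hf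
    have hstep : ∀ u w : V, G.Adj u w → f w = f u + 1 := by
      intro u w huw
      have hne : C u ≠ C w := C.valid huw
      have : ∀ a b : Fin 2, a ≠ b →
          (if b = 0 then (0 : ZMod 2) else 1) = (if a = 0 then (0 : ZMod 2) else 1) + 1 := by
        decide
      exact this _ _ hne
    have hiter : ∀ k : ℕ, f ((σ ^ k) v) = f v + k := by
      intro k
      induction k with
      | zero => simp
      | succ k ih =>
        have h1 : (σ ^ (k+1)) v = σ ((σ ^ k) v) := by rw [pow_succ', Equiv.Perm.mul_apply]
        rw [h1, hstep _ _ (h1 ▸ hadj' k), ih]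
        push_cast
        ring
    have := hiter l
    rw [hret] at this
    have hz : ((l : ZMod 2)) = 0 := left_eq_add.mp this
    exact (ZMod.natCast_eq_zero_iff l 2).mp hz
  have h4 : ¬ 4 ∣ l := by
    intro h4
    have hl4 : 4 ≤ l := Nat.le_of_dvd (by omega) h4
    obtain ⟨w, hlen, hsup, hedg⟩ := orbitWalk G σ v l (fun k _ => hadj' k)
    let w' : G.Walk v v := w.copy rfl hret
    have hlen' : w'.length = l := by simp [w', hlen]
    have hcyc : w'.IsCycle := by
      rw [SimpleGraph.Walk.isCycle_def]
      refine ⟨⟨?_⟩, ?_, ?_⟩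
      · show w'.edges.Nodup
        have hE : w'.edges = (List.range l).map (fun k => s((σ ^ k) v, (σ ^ (k+1)) v)) := by
          simp [w', hedg]
        rw [hE]
        refine List.Nodup.map_on ?_ List.nodup_range
        intro a ha b hb hab
        simp only [List.mem_range] at ha hb
        rw [Sym2.eq_iff] at hab
        rcases hab with ⟨h1, -⟩ | ⟨h1, h2⟩
        · exact modeq_eq_aux ((hS.pow_apply_eq_pow_apply hv).mp h1) ha hb
        · exfalso
          have m1 : a ≡ b + 1 [MOD l] := (hS.pow_apply_eq_pow_apply hv).mp h1
          have m2 : a + 1 ≡ b [MOD l] := (hS.pow_apply_eq_pow_apply hv).mp h2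
          have m3 : a ≡ a + 2 [MOD l] := m1.trans ((m2.add_right 1).symm)
          have : l ∣ 2 := by
            have := (Nat.modEq_iff_dvd' (by omega : a ≤ a + 2)).mp m3
            simpa using this
          have := Nat.le_of_dvd (by omega) this
          omega
      · intro hnil
        rw [hnil] at hlen'
        simp at hlen'
        omega
      · have hSup : w'.support = (List.range (l+1)).map (fun k => (σ ^ k) v) := by
          simp [w', hsup]
        rw [hSup, List.range_succ_eq_map, List.map_cons, List.tail_cons, List.map_map]
        refine List.Nodup.map_on ?_ List.nodup_range
        intro a ha b hb hab
        simp only [List.mem_range, Function.comp] at ha hb hab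
        have h1 : a + 1 ≡ b + 1 [MOD l] := (hS.pow_apply_eq_pow_apply hv).mp hab
        exact modeq_eq_aux (Nat.ModEq.add_right_cancel' 1 h1) ha hb
    exact hfree ⟨v, w', hcyc, by rw [hlen']; exact h4⟩
  omega

lemma prod_charmatrix_term {V : Type*} [Fintype V] (G : SimpleGraph V) (σ : Equiv.Perm V) :
    (∏ v, (Matrix.charmatrix (adjMat ℝ G)) (σ v) v)
      = C (∏ v ∈ σ.support, (-(adjMat ℝ G (σ v) v))) *
          X ^ (Fintype.card V - σ.support.card) := by
  rw [← Finset.prod_mul_prod_compl σ.support]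
  congr 1
  · rw [map_prod]
    refine Finset.prod_congr rfl fun v hv => ?_
    rw [Equiv.Perm.mem_support] at hv
    rw [Matrix.charmatrix_apply_ne _ _ _ hv, map_neg]
  · have : ∀ v ∈ σ.supportᶜ, (Matrix.charmatrix (adjMat ℝ G)) (σ v) v = X := by
      intro v hv
      rw [Finset.mem_compl, Equiv.Perm.notMem_support] at hv
      rw [hv, Matrix.charmatrix_apply_eq]
      have : adjMat ℝ G v v = 0 := by simp [adjMat]
      rw [this, map_zero, sub_zero]
    rw [Finset.prod_congr rfl this, Finset.prod_const, Finset.card_compl]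

lemma coeff_term {V : Type*} [Fintype V] (G : SimpleGraph V) (σ : Equiv.Perm V)
    {i : ℕ} (hi : i ≤ Fintype.card V) :
    (∏ v, (Matrix.charmatrix (adjMat ℝ G)) (σ v) v).coeff (Fintype.card V - i)
      = if σ.support.card = i then ∏ v ∈ σ.support, (-(adjMat ℝ G (σ v) v)) else 0 := by
  rw [prod_charmatrix_term, coeff_C_mul, coeff_X_pow]
  have hsle : σ.support.card ≤ Fintype.card V := Finset.card_le_univ _
  by_cases h : σ.support.card = i
  · simp [h, Nat.sub_eq, mul_one]
  · have : Fintype.card V - i ≠ Fintype.card V - σ.support.card := by omega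
    simp [h, this]

lemma multiset_parity (m : Multiset ℕ) (h : ∀ l ∈ m, l % 4 = 2) :
    2 ∣ m.sum ∧ (m.sum / 2 + Multiset.card m) % 2 = 0 := by
  induction m using Multiset.induction_on with
  | empty => simp
  | cons a s ih =>
    have ha := h a (Multiset.mem_cons_self a s)
    obtain ⟨h1, h2⟩ := ih (fun l hl => h l (Multiset.mem_cons_of_mem hl))
    rw [Multiset.sum_cons, Multiset.card_cons]
    omega

lemma sign_cast_eq {V : Type*} [Fintype V] (σ : Equiv.Perm V)
    (h : ∀ l ∈ σ.cycleType, l % 4 = 2) {i : ℕ} (hi : σ.support.card = i) (hie : Even i) :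
    ((-1 : ℝ) ^ (i / 2)) * ((Equiv.Perm.sign σ : ℤ) : ℝ) = 1 := by
  have hs : ((Equiv.Perm.sign σ : ℤ) : ℝ)
      = (-1 : ℝ) ^ (σ.cycleType.sum + Multiset.card σ.cycleType) := by
    rw [Equiv.Perm.sign_of_cycleType]
    push_cast
    simp
  obtain ⟨h1, h2⟩ := multiset_parity _ h
  rw [hs, Equiv.Perm.sum_cycleType, hi, ← pow_add]
  refine Even.neg_one_pow ?_
  rw [Equiv.Perm.sum_cycleType, hi] at h1 h2
  rw [Nat.even_iff] at hie ⊢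
  omega


/-- For a `C_{4k}`-free bipartite graph `G` on `n` vertices, the coefficients
of `x^{n-i}` in the characteristic and permanental polynomials satisfy
`b_i = (-1)^{i/2} a_i` for every nonnegative even `i`. -/
theorem stmt_16 {V : Type*} [Fintype V] (G : SimpleGraph V) (hbip : G.Colorable 2)
    (hfree : C4kFree G) :
    ∀ i ≤ Fintype.card V, Even i →
      (permPolyG ℝ G).coeff (Fintype.card V - i)
        = (-1 : ℝ) ^ (i / 2) * (charPolyG ℝ G).coeff (Fintype.card V - i) := by
  intro i hi hie
  have hper : (permPolyG ℝ G).coeff (Fintype.card V - i)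
      = ∑ σ : Equiv.Perm V,
          (if σ.support.card = i then ∏ v ∈ σ.support, (-(adjMat ℝ G (σ v) v)) else 0) := by
    unfold permPolyG Matrix.permanent
    rw [Polynomial.finset_sum_coeff]
    exact Finset.sum_congr rfl fun σ _ => coeff_term G σ hi
  have hdet : (charPolyG ℝ G).coeff (Fintype.card V - i)
      = ∑ σ : Equiv.Perm V, ((Equiv.Perm.sign σ : ℤ) : ℝ) *
          (if σ.support.card = i then ∏ v ∈ σ.support, (-(adjMat ℝ G (σ v) v)) else 0) := by
    unfold charPolyG Matrix.charpoly
    rw [Matrix.det_apply', Polynomial.finset_sum_coeff]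
    refine Finset.sum_congr rfl fun σ _ => ?_
    rw [show ((Equiv.Perm.sign σ : ℤ) : ℝ[X]) = C ((Equiv.Perm.sign σ : ℤ) : ℝ) by
      rw [Polynomial.C_eq_intCast]]
    rw [coeff_C_mul, coeff_term G σ hi]
  rw [hper, hdet, Finset.mul_sum]
  refine Finset.sum_congr rfl fun σ _ => ?_
  by_cases hcard : σ.support.card = i
  · by_cases hall : ∀ v ∈ σ.support, G.Adj (σ v) v
    · have hcyc : ∀ l ∈ σ.cycleType, l % 4 = 2 := by
        intro l hl
        rw [Equiv.Perm.cycleType_def, Multiset.mem_map] at hl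
        obtain ⟨c, hc, rfl⟩ := hl
        have hcmem : c ∈ σ.cycleFactorsFinset := hc
        have := keyCard G hbip hfree σ
          (fun v hv => hall v (Equiv.Perm.mem_support.mpr hv))
          c.support (Equiv.Perm.isCycleOn_support_of_mem_cycleFactorsFinset hcmem)
          (fun v hv => Equiv.Perm.mem_support.mp
            (Equiv.Perm.mem_cycleFactorsFinset_support_le hcmem hv))
          ((Equiv.Perm.mem_cycleFactorsFinset_iff.mp hcmem).1.two_le_card_support)
        simpa using this
      have hfac := sign_cast_eq σ hcyc hcard hie
      simp only [hcard, if_pos rfl]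
      rw [← mul_assoc, hfac, one_mul]
    · push_neg at hall
      obtain ⟨v, hv, hnadj⟩ := hall
      have hz : ∏ v ∈ σ.support, (-(adjMat ℝ G (σ v) v)) = 0 :=
        Finset.prod_eq_zero hv (by simp [adjMat, hnadj])
      simp [hcard, hz]
  · simp [hcard]


end
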